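/- Let (a, b) be a pair of Δ_C-valued random vectors with E[a | b] = (M^0)'b almost surely, where M^0 is a row-stochastic C×C matrix with all entries strictly positive, and suppose that for every i ∈ {1,…,C} and every ε > 0, P(b_i ≥ 1 − ε) > 0 (Assumption 1). Fix ξ > 0. Then for every C×(C−1) matrix M̃ whose completion M (with M_{iC} = 1 − Σ_{j<C} M_{ij}) has all entries strictly positive, the C(C−1) × C(C−1) matrix H(M̃), whose rows and columns are indexed by pairs (i,j) with i ∈ {1,…,C} and j ∈ {1,…,C−1} and whose entries are H_{(i,j),(i',j')} = ξ·E[ b_i b_{i'} ( 1{j=j'}·a_j/((M'b)_j)^2 + a_C/((M'b)_C)^2 ) ], is symmetric positive definite. (H(M̃) is the Hessian of M̃ ↦ ξ·E[D_KL(a ‖ M'b)].) -/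

import Mathlib

open MeasureTheory ProbabilityTheory Filter Finset
open scoped ENNReal NNReal BigOperators

noncomputable section

namespace GBQL

/-- The probability simplex Δ_C in ℝ^C. -/
def simplex (C : ℕ) : Set (Fin C → ℝ) :=
  {x | (∀ i, 0 ≤ x i) ∧ ∑ i, x i = 1}

/-- A C×C matrix (as a function) is row-stochastic. -/
def rowStochastic {C : ℕ} (M : Fin C → Fin C → ℝ) : Prop :=
  (∀ i j, 0 ≤ M i j) ∧ ∀ i, ∑ j, M i j = 1

/-- M' x, the transpose of M applied to x : (M'x)_j = Σ_i M_{ij} x_i. -/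
def mtv {C : ℕ} (M : Fin C → Fin C → ℝ) (x : Fin C → ℝ) : Fin C → ℝ :=
  fun j => ∑ i, M i j * x i

open scoped Classical in
/-- Kullback–Leibler divergence D_KL(p‖q) = Σ_j p_j log(p_j/q_j) as an element of [0,∞],
with conventions 0·log(0/x) = 0 and p_j log(p_j/0) = ∞ for p_j > 0. -/
def klDiv {C : ℕ} (p q : Fin C → ℝ) : ℝ≥0∞ :=
  if ∃ j, 0 < p j ∧ q j = 0 then ⊤
  else ENNReal.ofReal (∑ j, if p j = 0 then 0 else p j * Real.log (p j / q j))

/-- Real-valued Kullback–Leibler divergence (agreeing with `klDiv` whenever `q` has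
strictly positive entries). -/
def klReal {C : ℕ} (p q : Fin C → ℝ) : ℝ :=
  ∑ j, if p j = 0 then 0 else p j * Real.log (p j / q j)

/-- Completion of a C×(C−1) matrix M̃ to a C×C matrix M with M_{iC} = 1 − Σ_{j<C} M_{ij}. -/
def completeM {c : ℕ} (Mt : Fin (c+1) → Fin c → ℝ) : Fin (c+1) → Fin (c+1) → ℝ :=
  fun i j => if h : (j : ℕ) < c then Mt i ⟨j, h⟩ else 1 - ∑ k, Mt i k

/-- Completion of p̃ ∈ ℝ^{C−1} to p ∈ ℝ^C with p_C = 1 − Σ_{i<C} p_i. -/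
def completeV {c : ℕ} (pt : Fin c → ℝ) : Fin (c+1) → ℝ :=
  fun i => if h : (i : ℕ) < c then pt ⟨i, h⟩ else 1 - ∑ k, pt k

/-- The first C−1 columns of a C×C matrix. -/
def truncM {c : ℕ} (M : Fin (c+1) → Fin (c+1) → ℝ) : Fin (c+1) → Fin c → ℝ :=
  fun i j => M i (Fin.castSucc j)

/-- The first C−1 coordinates of a vector in ℝ^C. -/
def truncV {c : ℕ} (p : Fin (c+1) → ℝ) : Fin c → ℝ := fun i => p (Fin.castSucc i)

/-- The parameter space: θ = (M̃, p̃). -/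
abbrev Param (c : ℕ) := (Fin (c+1) → Fin c → ℝ) × (Fin c → ℝ)

/-- S_d = {x ∈ ℝ^d : x_i ≥ 0, Σ_i x_i ≤ 1}. -/
def Sset (d : ℕ) : Set (Fin d → ℝ) := {x | (∀ i, 0 ≤ x i) ∧ ∑ i, x i ≤ 1}

/-- Θ = (S_{C−1})^C × S_{C−1}. -/
def Theta (c : ℕ) : Set (Param c) := {θ | (∀ i, θ.1 i ∈ Sset c) ∧ θ.2 ∈ Sset c}

/-- ℓ1 distance on the concatenated coordinates of θ. -/
def l1dist {c : ℕ} (θ θ' : Param c) : ℝ :=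
  (∑ i, ∑ j, |θ.1 i j - θ'.1 i j|) + ∑ i, |θ.2 i - θ'.2 i|

/-- The empirical loss f_N(θ), valued in [0,∞]. -/
def fN {c : ℕ} (N n : ℕ) (aU aL bL : ℕ → Fin (c+1) → ℝ) (θ : Param c) : ℝ≥0∞ :=
  ((∑ r ∈ Finset.range N, klDiv (aU r) (mtv (completeM θ.1) (completeV θ.2))) +
    ∑ r ∈ Finset.range n, klDiv (aL r) (mtv (completeM θ.1) (bL r))) / (N : ℝ≥0∞)

/-- The empirical loss f_N(θ), real-valued version (valid near interior points). -/
def fNreal {c : ℕ} (N n : ℕ) (aU aL bL : ℕ → Fin (c+1) → ℝ) (θ : Param c) : ℝ :=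
  ((∑ r ∈ Finset.range N, klReal (aU r) (mtv (completeM θ.1) (completeV θ.2))) +
    ∑ r ∈ Finset.range n, klReal (aL r) (mtv (completeM θ.1) (bL r))) / (N : ℝ)

/-- exp(−x) for x ∈ [0,∞], with exp(−∞) = 0. -/
def expNeg (x : ℝ≥0∞) : ℝ≥0∞ :=
  if x = ⊤ then 0 else ENNReal.ofReal (Real.exp (-x.toReal))

/-- The extended logarithm [0,∞] → [−∞,∞]. -/
def elog (x : ℝ≥0∞) : EReal :=
  if x = 0 then ⊥ else if x = ⊤ then ⊤ else ((Real.log x.toReal : ℝ) : EReal)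

/-- Index set for the coordinates of θ = (M̃, p̃): pairs (i,j) for M̃ entries and i for p̃. -/
abbrev Idx (c : ℕ) := (Fin (c+1) × Fin c) ⊕ Fin c

/-- Coordinates of θ as a vector indexed by `Idx c`. -/
def vecParam {c : ℕ} (θ : Param c) : Idx c → ℝ :=
  Sum.elim (fun ij => θ.1 ij.1 ij.2) (fun i => θ.2 i)

/-- Standard basis vectors of the parameter space, indexed by `Idx c`. -/
def basisP (c : ℕ) : Idx c → Param c :=
  Sum.elim (fun ij => (fun i j => if i = ij.1 ∧ j = ij.2 then 1 else 0, 0))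
    (fun i0 => (0, fun i => if i = i0 then 1 else 0))


lemma quad_id {c : ℕ} (v : Fin (c+1) × Fin c → ℝ) (β : Fin (c+1) → ℝ) (f : Fin (c+1) → ℝ) :
    (∑ p : Fin (c+1) × Fin c, ∑ p' : Fin (c+1) × Fin c,
      v p * v p' * (β p.1 * β p'.1 *
        ((if p.2 = p'.2 then f (Fin.castSucc p.2) else 0) + f (Fin.last c))))
    = (∑ j : Fin c, (∑ i, v (i,j) * β i)^2 * f (Fin.castSucc j))
      + (∑ j : Fin c, ∑ i, v (i,j) * β i)^2 * f (Fin.last c) := by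
  rw [show (∑ j : Fin c, ∑ i, v (i,j) * β i) = ∑ i, ∑ j : Fin c, v (i,j) * β i from
    Finset.sum_comm]
  simp only [Fintype.sum_prod_type, mul_add, Finset.sum_add_distrib, mul_ite, mul_zero,
    Finset.sum_ite_eq, Finset.mem_univ, if_true, sq, Finset.sum_mul, Finset.mul_sum]
  refine congrArg₂ HAdd.hAdd ?_ ?_
  · rw [Finset.sum_comm]
    refine Finset.sum_congr rfl fun j _ => ?_
    rw [Finset.sum_comm]
    exact Finset.sum_congr rfl fun i _ => Finset.sum_congr rfl fun i' _ => by ring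
  · refine Finset.sum_congr rfl fun i _ => ?_
    refine Finset.sum_congr rfl fun j _ => ?_
    refine Finset.sum_congr rfl fun i' _ => ?_
    exact Finset.sum_congr rfl fun j' _ => by ring

lemma integral_comp_mul_eq {Ωs : Type*} [mΩ : MeasurableSpace Ωs] {μ : Measure Ωs}
    [IsProbabilityMeasure μ] {d : ℕ}
    {a : Ωs → ℝ} {b : Ωs → Fin d → ℝ} (hb : Measurable b)
    (ha_int : Integrable a μ)
    {G : (Fin d → ℝ) → ℝ} (hG : Measurable G) (K : ℝ) (hK : ∀ ω, ‖G (b ω)‖ ≤ K)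
    {φ : Ωs → ℝ}
    (hcond : μ[a | MeasurableSpace.comap b inferInstance] =ᵐ[μ] φ) :
    ∫ ω, G (b ω) * a ω ∂μ = ∫ ω, G (b ω) * φ ω ∂μ := by
  have hm : MeasurableSpace.comap b inferInstance ≤ mΩ := hb.comap_le
  have hb_m : Measurable[MeasurableSpace.comap b inferInstance] b :=
    Measurable.of_comap_le le_rfl
  have hGb : StronglyMeasurable[MeasurableSpace.comap b inferInstance] (fun ω => G (b ω)) :=
    (hG.comp hb_m).stronglyMeasurable
  have hmul : μ[(fun ω => G (b ω) * a ω) | MeasurableSpace.comap b inferInstance]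
      =ᵐ[μ] fun ω => G (b ω) * (μ[a | MeasurableSpace.comap b inferInstance]) ω :=
    condExp_stronglyMeasurable_mul_of_bound hm hGb ha_int K
      (Filter.Eventually.of_forall hK)
  calc ∫ ω, G (b ω) * a ω ∂μ
      = ∫ ω, (μ[(fun ω => G (b ω) * a ω) | MeasurableSpace.comap b inferInstance]) ω ∂μ :=
        (integral_condExp hm).symm
    _ = ∫ ω, G (b ω) * (μ[a | MeasurableSpace.comap b inferInstance]) ω ∂μ :=
        integral_congr_ae hmul
    _ = ∫ ω, G (b ω) * φ ω ∂μ := by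
        refine integral_congr_ae ?_
        filter_upwards [hcond] with ω h
        rw [h]

lemma integral_pos_aux {Ωs : Type*} [MeasurableSpace Ωs] {μ : Measure Ωs}
    [IsProbabilityMeasure μ]
    {F : Ωs → ℝ} (hFint : Integrable F μ) (hFnn : ∀ ω, 0 ≤ F ω)
    {S : Set Ωs} (hS : MeasurableSet S) (hSpos : 0 < μ S) {δ : ℝ} (hδ : 0 < δ)
    (hlow : ∀ ω ∈ S, δ ≤ F ω) : 0 < ∫ ω, F ω ∂μ := by
  have h1 : ∫ ω in S, F ω ∂μ ≤ ∫ ω, F ω ∂μ :=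
    setIntegral_le_integral hFint (Filter.Eventually.of_forall hFnn)
  have h2 : δ * (μ S).toReal ≤ ∫ ω in S, F ω ∂μ :=
    setIntegral_ge_of_const_le_real hS (measure_ne_top μ S) hlow hFint.integrableOn
  have h3 : 0 < (μ S).toReal := ENNReal.toReal_pos hSpos.ne' (measure_ne_top μ S)
  nlinarith

lemma w_lb {c : ℕ} (v : Fin (c+1) × Fin c → ℝ) (p0 : Fin (c+1) × Fin c) (hp0 : v p0 ≠ 0)
    (β : Fin (c+1) → ℝ) (hβ : β ∈ simplex (c+1))
    (hb0 : 1 - |v p0| / (4 * ((∑ p, |v p|) + 1)) ≤ β p0.1) :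
    |v p0| / 2 ≤ |∑ i, v (i, p0.2) * β i| := by
  obtain ⟨hβnn, hβsum⟩ := hβ
  set d := |v p0| with hd_def
  set V := ∑ p, |v p| with hV_def
  have hd : 0 < d := abs_pos.mpr hp0
  have hdV : d ≤ V := by
    rw [hd_def, hV_def]
    exact Finset.single_le_sum (f := fun p => |v p|) (fun p _ => abs_nonneg _) (mem_univ p0)
  have hV1 : 0 < V + 1 := by linarith
  set ε := d / (4 * (V + 1)) with hε_def
  have hε : 0 < ε := by positivity
  have hεd : 4 * (V + 1) * ε = d := by rw [hε_def]; field_simp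
  have hβle1 : β p0.1 ≤ 1 := by
    rw [← hβsum]
    exact Finset.single_le_sum (fun i _ => hβnn i) (mem_univ _)
  have hrest : ∑ i ∈ univ.erase p0.1, β i = 1 - β p0.1 := by
    have := Finset.add_sum_erase univ β (mem_univ p0.1)
    rw [hβsum] at this; linarith
  have hsplit : ∑ i, v (i, p0.2) * β i
      = v (p0.1, p0.2) * β p0.1 + ∑ i ∈ univ.erase p0.1, v (i, p0.2) * β i := by
    rw [Finset.add_sum_erase univ (fun i => v (i, p0.2) * β i) (mem_univ p0.1)]
  have htail : |∑ i ∈ univ.erase p0.1, v (i, p0.2) * β i| ≤ V * ε := by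
    calc |∑ i ∈ univ.erase p0.1, v (i, p0.2) * β i|
        ≤ ∑ i ∈ univ.erase p0.1, |v (i, p0.2) * β i| := Finset.abs_sum_le_sum_abs _ _
      _ ≤ ∑ i ∈ univ.erase p0.1, |v (i, p0.2)| * ε := by
          refine Finset.sum_le_sum fun i hi => ?_
          rw [abs_mul, abs_of_nonneg (hβnn i)]
          refine mul_le_mul_of_nonneg_left ?_ (abs_nonneg _)
          have hi' : i ≠ p0.1 := Finset.ne_of_mem_erase hi
          have : β i ≤ 1 - β p0.1 := by
            rw [← hrest]
            exact Finset.single_le_sum (fun k _ => hβnn k)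
              (Finset.mem_erase.mpr ⟨hi', mem_univ i⟩)
          linarith
      _ ≤ V * ε := by
          rw [← Finset.sum_mul]
          refine mul_le_mul_of_nonneg_right ?_ hε.le
          calc ∑ i ∈ univ.erase p0.1, |v (i, p0.2)|
              ≤ ∑ i : Fin (c+1), |v (i, p0.2)| :=
                Finset.sum_le_sum_of_subset_of_nonneg (Finset.erase_subset _ _)
                  (fun i _ _ => abs_nonneg _)
            _ ≤ V := by
                rw [hV_def, Fintype.sum_prod_type]
                exact Finset.sum_le_sum fun i _ =>
                  Finset.single_le_sum (f := fun j => |v (i, j)|)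
                    (fun j _ => abs_nonneg _) (mem_univ p0.2)
  have hhead : d * (1 - ε) ≤ |v (p0.1, p0.2) * β p0.1| := by
    rw [abs_mul, abs_of_nonneg (hβnn p0.1)]
    have hvv : v (p0.1, p0.2) = v p0 := by rw [Prod.mk.eta]
    rw [hvv]
    have hb0' : 1 - ε ≤ β p0.1 := hb0
    have h1ε : 0 ≤ 1 - ε := by nlinarith
    nlinarith
  have habs : |v (p0.1, p0.2) * β p0.1| ≤ |∑ i, v (i, p0.2) * β i|
      + |∑ i ∈ univ.erase p0.1, v (i, p0.2) * β i| := by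
    have hsub : v (p0.1, p0.2) * β p0.1
        = (∑ i, v (i, p0.2) * β i) - ∑ i ∈ univ.erase p0.1, v (i, p0.2) * β i := by
      rw [hsplit]; ring
    rw [hsub]
    exact abs_sub _ _
  have hεV : V * ε ≤ d / 4 := by nlinarith
  have hεd' : d * ε ≤ d / 4 := by nlinarith
  nlinarith [abs_nonneg (∑ i, v (i, p0.2) * β i)]

/-- under E[a|b] = (M⁰)'b a.s. (M⁰ row-stochastic, strictly positive entries) and
Assumption 1 on b, for ξ > 0 and any C×(C−1) matrix M̃ whose completion M has strictly positive
entries, the Hessian H(M̃) of M̃ ↦ ξ·E[D_KL(a ‖ M'b)], with entries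
H_{(i,j),(i',j')} = ξ·E[b_i b_{i'} (1{j=j'}·a_j/((M'b)_j)² + a_C/((M'b)_C)²)],
is symmetric positive definite. -/
theorem stmt3 {Ωs : Type*} [MeasurableSpace Ωs] (μ : Measure Ωs) [IsProbabilityMeasure μ]
    (c : ℕ) (hc : 1 ≤ c)
    (a b : Ωs → Fin (c+1) → ℝ) (ha_meas : Measurable a) (hb_meas : Measurable b)
    (ha_simplex : ∀ ω, a ω ∈ simplex (c+1)) (hb_simplex : ∀ ω, b ω ∈ simplex (c+1))
    (M0 : Fin (c+1) → Fin (c+1) → ℝ) (hM0 : rowStochastic M0) (hM0pos : ∀ i j, 0 < M0 i j)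
    (hcond : ∀ j, μ[(fun ω => a ω j) | MeasurableSpace.comap b inferInstance]
      =ᵐ[μ] fun ω => mtv M0 (b ω) j)
    (hpos : ∀ i : Fin (c+1), ∀ ε > (0 : ℝ), 0 < μ {ω | 1 - ε ≤ b ω i})
    (ξ : ℝ) (hξ : 0 < ξ)
    (Mt : Fin (c+1) → Fin c → ℝ) (hMt : ∀ i j, 0 < completeM Mt i j) :
    (Matrix.of fun ij ij' : Fin (c+1) × Fin c =>
      ξ * ∫ ω, b ω ij.1 * b ω ij'.1 *
        ((if ij.2 = ij'.2 then
            a ω (Fin.castSucc ij.2) / (mtv (completeM Mt) (b ω) (Fin.castSucc ij.2)) ^ 2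
          else 0) +
          a ω (Fin.last c) / (mtv (completeM Mt) (b ω) (Fin.last c)) ^ 2) ∂μ).PosDef := by
  obtain ⟨hM0nn, hM0row⟩ := hM0
  set M := completeM Mt with hMdef
  -- basic facts about M and M0
  have hMrow : ∀ i, ∑ j, M i j = 1 := by
    intro i
    rw [hMdef]
    rw [Fin.sum_univ_castSucc]
    have h1 : ∀ j : Fin c, completeM Mt i (Fin.castSucc j) = Mt i j := by
      intro j
      simp [completeM, j.isLt]
    have h2 : completeM Mt i (Fin.last c) = 1 - ∑ k, Mt i k := by
      simp [completeM]
    rw [h2, Finset.sum_congr rfl fun j _ => h1 j]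
    ring
  have hMle1 : ∀ i j, M i j ≤ 1 := by
    intro i j
    calc M i j ≤ ∑ j', M i j' :=
      Finset.single_le_sum (fun j' _ => (hMt i j').le) (mem_univ j)
    _ = 1 := hMrow i
  have hM0le1 : ∀ i j, M0 i j ≤ 1 := by
    intro i j
    calc M0 i j ≤ ∑ j', M0 i j' :=
      Finset.single_le_sum (fun j' _ => hM0nn i j') (mem_univ j)
    _ = 1 := hM0row i
  obtain ⟨pm, -, hpm⟩ := Finset.exists_min_image (univ : Finset (Fin (c+1) × Fin (c+1)))
    (fun p => M p.1 p.2) ⟨(0,0), mem_univ _⟩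
  obtain ⟨pz, -, hpz⟩ := Finset.exists_min_image (univ : Finset (Fin (c+1) × Fin (c+1)))
    (fun p => M0 p.1 p.2) ⟨(0,0), mem_univ _⟩
  set mM := M pm.1 pm.2 with hmM_def
  set m0 := M0 pz.1 pz.2 with hm0_def
  have hmMpos : 0 < mM := hMt pm.1 pm.2
  have hm0pos : 0 < m0 := hM0pos pz.1 pz.2
  have hmMle : ∀ i j, mM ≤ M i j := fun i j => hpm (i,j) (mem_univ _)
  have hm0le : ∀ i j, m0 ≤ M0 i j := fun i j => hpz (i,j) (mem_univ _)
  -- bounds for simplex vectors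
  have hx_le1 : ∀ x ∈ simplex (c+1), ∀ i, x i ≤ 1 := by
    intro x hx i
    rw [← hx.2]
    exact Finset.single_le_sum (fun k _ => hx.1 k) (mem_univ i)
  have hq_lb : ∀ x ∈ simplex (c+1), ∀ k, mM ≤ mtv M x k := by
    intro x hx k
    calc mM = ∑ i, mM * x i := by rw [← Finset.mul_sum, hx.2, mul_one]
    _ ≤ ∑ i, M i k * x i :=
      Finset.sum_le_sum fun i _ => mul_le_mul_of_nonneg_right (hmMle i k) (hx.1 i)
    _ = mtv M x k := rfl
  have hq_ub : ∀ x ∈ simplex (c+1), ∀ k, mtv M x k ≤ 1 := by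
    intro x hx k
    calc mtv M x k = ∑ i, M i k * x i := rfl
    _ ≤ ∑ i, x i := Finset.sum_le_sum fun i _ => mul_le_of_le_one_left (hx.1 i) (hMle1 i k)
    _ = 1 := hx.2
  have hp_lb : ∀ x ∈ simplex (c+1), ∀ k, m0 ≤ mtv M0 x k := by
    intro x hx k
    calc m0 = ∑ i, m0 * x i := by rw [← Finset.mul_sum, hx.2, mul_one]
    _ ≤ ∑ i, M0 i k * x i :=
      Finset.sum_le_sum fun i _ => mul_le_mul_of_nonneg_right (hm0le i k) (hx.1 i)
    _ = mtv M0 x k := rfl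
  have hp_ub : ∀ x ∈ simplex (c+1), ∀ k, mtv M0 x k ≤ 1 := by
    intro x hx k
    calc mtv M0 x k = ∑ i, M0 i k * x i := rfl
    _ ≤ ∑ i, x i := Finset.sum_le_sum fun i _ => mul_le_of_le_one_left (hx.1 i) (hM0le1 i k)
    _ = 1 := hx.2
  -- measurability
  have hbm : ∀ i, Measurable fun ω => b ω i := fun i => (measurable_pi_apply i).comp hb_meas
  have ham : ∀ j, Measurable fun ω => a ω j := fun j => (measurable_pi_apply j).comp ha_meas
  have hmtvx : ∀ (A : Fin (c+1) → Fin (c+1) → ℝ) (k : Fin (c+1)),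
      Measurable fun x : Fin (c+1) → ℝ => mtv A x k := by
    intro A k
    simp only [mtv]
    exact Finset.measurable_sum _ fun i _ => measurable_const.mul (measurable_pi_apply i)
  -- bounds for a, b
  have ha01 : ∀ ω j, 0 ≤ a ω j ∧ a ω j ≤ 1 :=
    fun ω j => ⟨(ha_simplex ω).1 j, hx_le1 _ (ha_simplex ω) j⟩
  have hb01 : ∀ ω i, 0 ≤ b ω i ∧ b ω i ≤ 1 :=
    fun ω i => ⟨(hb_simplex ω).1 i, hx_le1 _ (hb_simplex ω) i⟩
  -- integrability helper
  have hInt : ∀ (F : Ωs → ℝ) (K : ℝ), Measurable F → (∀ ω, ‖F ω‖ ≤ K) → Integrable F μ :=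
    fun F K h1 h2 =>
      (integrable_const K).mono' h1.aestronglyMeasurable (Filter.Eventually.of_forall h2)
  -- the G functions
  have hGmeas : ∀ (i i' k : Fin (c+1)),
      Measurable fun x : Fin (c+1) → ℝ => x i * x i' / (mtv M x k)^2 :=
    fun i i' k => ((measurable_pi_apply i).mul (measurable_pi_apply i')).div
      ((hmtvx M k).pow_const 2)
  have hGbd : ∀ (i i' k : Fin (c+1)) (ω : Ωs),
      ‖b ω i * b ω i' / (mtv M (b ω) k)^2‖ ≤ 1 / mM^2 := by
    intro i i' k ω
    have hq := hq_lb _ (hb_simplex ω) k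
    have h1 := hb01 ω i
    have h2 := hb01 ω i'
    rw [Real.norm_eq_abs, abs_div, abs_of_nonneg (mul_nonneg h1.1 h2.1),
      abs_of_nonneg (by positivity : (0:ℝ) ≤ (mtv M (b ω) k)^2)]
    exact div_le_div₀ zero_le_one (by nlinarith) (by positivity) (by nlinarith)
  -- the R functions
  set R : Fin (c+1) → Ωs → ℝ := fun k ω => mtv M0 (b ω) k / (mtv M (b ω) k)^2 with hRdef
  have hRmeas : ∀ k, Measurable (R k) := fun k =>
    ((hmtvx M0 k).comp hb_meas).div (((hmtvx M k).comp hb_meas).pow_const 2)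
  have hR_lb : ∀ k ω, m0 ≤ R k ω := by
    intro k ω
    have hq1 := hq_ub _ (hb_simplex ω) k
    have hq2 := hq_lb _ (hb_simplex ω) k
    have hp := hp_lb _ (hb_simplex ω) k
    have hqnn : (0:ℝ) < mtv M (b ω) k := lt_of_lt_of_le hmMpos hq2
    show m0 ≤ mtv M0 (b ω) k / mtv M (b ω) k ^ 2
    rw [le_div_iff₀ (by positivity)]
    have hqsq : mtv M (b ω) k ^ 2 ≤ 1 := by nlinarith
    nlinarith
  have hR_ub : ∀ k ω, R k ω ≤ 1 / mM^2 := by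
    intro k ω
    have hq2 := hq_lb _ (hb_simplex ω) k
    have hp := hp_ub _ (hb_simplex ω) k
    have hp' := hp_lb _ (hb_simplex ω) k
    show mtv M0 (b ω) k / mtv M (b ω) k ^ 2 ≤ 1 / mM ^ 2
    exact div_le_div₀ zero_le_one hp (by positivity) (by nlinarith)
  have hR_nn : ∀ k ω, 0 ≤ R k ω := fun k ω => le_trans hm0pos.le (hR_lb k ω)
  -- g functions and entry rewrite
  set g : (Fin (c+1) × Fin c) → (Fin (c+1) × Fin c) → Ωs → ℝ := fun p p' ω =>
    b ω p.1 * b ω p'.1 *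
      ((if p.2 = p'.2 then R (Fin.castSucc p.2) ω else 0) + R (Fin.last c) ω) with hgdef
  have hgmeas : ∀ p p', Measurable (g p p') := by
    intro p p'
    rw [hgdef]
    exact ((hbm p.1).mul (hbm p'.1)).mul
      ((Measurable.ite (MeasurableSet.const _) (hRmeas _) measurable_const).add (hRmeas _))
  have hgbd : ∀ p p' ω, ‖g p p' ω‖ ≤ 2 / mM^2 := by
    intro p p' ω
    have h1 := hb01 ω p.1
    have h2 := hb01 ω p'.1
    have h3 := hR_nn (Fin.castSucc p.2) ω
    have h4 := hR_nn (Fin.last c) ω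
    have h5 := hR_ub (Fin.castSucc p.2) ω
    have h6 := hR_ub (Fin.last c) ω
    have hite1 : (0:ℝ) ≤ (if p.2 = p'.2 then R (Fin.castSucc p.2) ω else 0) := by
      split <;> simp [h3]
    have hite2 : (if p.2 = p'.2 then R (Fin.castSucc p.2) ω else 0) ≤ 1 / mM^2 := by
      split
      · exact h5
      · positivity
    have hnn : (0:ℝ) ≤ g p p' ω :=
      mul_nonneg (mul_nonneg h1.1 h2.1) (add_nonneg hite1 h4)
    have hval : g p p' ω = b ω p.1 * b ω p'.1 *
        ((if p.2 = p'.2 then R (Fin.castSucc p.2) ω else 0) + R (Fin.last c) ω) := rfl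
    rw [Real.norm_eq_abs, abs_of_nonneg hnn, hval]
    have : 2 / mM^2 = 1 * (1 / mM^2 + 1 / mM^2) := by ring
    rw [this]
    refine mul_le_mul (by nlinarith) (by linarith) (by linarith) zero_le_one
  have hgint : ∀ p p', Integrable (g p p') μ :=
    fun p p' => hInt _ _ (hgmeas p p') (hgbd p p')
  -- the entry rewrite using conditional expectation
  have haint : ∀ k, Integrable (fun ω => a ω k) μ := by
    intro k
    refine hInt _ 1 (ham k) fun ω => ?_
    rw [Real.norm_eq_abs, abs_of_nonneg (ha01 ω k).1]
    exact (ha01 ω k).2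
  have hGAint : ∀ (i i' k k' : Fin (c+1)),
      Integrable (fun ω => b ω i * b ω i' / (mtv M (b ω) k)^2 * a ω k') μ := by
    intro i i' k k'
    refine hInt _ (1 / mM^2) (((hGmeas i i' k).comp hb_meas).mul (ham k')) fun ω => ?_
    rw [Real.norm_eq_abs, abs_mul]
    calc |b ω i * b ω i' / (mtv M (b ω) k)^2| * |a ω k'|
        ≤ (1 / mM^2) * 1 := by
          refine mul_le_mul (hGbd i i' k ω) ?_ (abs_nonneg _) (by positivity)
          rw [abs_of_nonneg (ha01 ω k').1]; exact (ha01 ω k').2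
      _ = 1 / mM^2 := mul_one _
  have hGRint : ∀ (i i' k k' : Fin (c+1)),
      Integrable (fun ω => b ω i * b ω i' / (mtv M (b ω) k)^2 * mtv M0 (b ω) k') μ := by
    intro i i' k k'
    refine hInt _ (1 / mM^2) (((hGmeas i i' k).comp hb_meas).mul
      ((hmtvx M0 k').comp hb_meas)) fun ω => ?_
    rw [Real.norm_eq_abs, abs_mul]
    calc |b ω i * b ω i' / (mtv M (b ω) k)^2| * |mtv M0 (b ω) k'|
        ≤ (1 / mM^2) * 1 := by
          refine mul_le_mul (hGbd i i' k ω) ?_ (abs_nonneg _) (by positivity)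
          rw [abs_of_nonneg (le_trans hm0pos.le (hp_lb _ (hb_simplex ω) k'))]
          exact hp_ub _ (hb_simplex ω) k'
      _ = 1 / mM^2 := mul_one _
  have hswap : ∀ (i i' k k' : Fin (c+1)),
      ∫ ω, b ω i * b ω i' / (mtv M (b ω) k)^2 * a ω k' ∂μ
      = ∫ ω, b ω i * b ω i' / (mtv M (b ω) k)^2 * mtv M0 (b ω) k' ∂μ := by
    intro i i' k k'
    exact integral_comp_mul_eq hb_meas (haint k') (hGmeas i i' k) (1 / mM^2)
      (hGbd i i' k) (hcond k')
  have hEntry : ∀ p p' : Fin (c+1) × Fin c,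
      (∫ ω, b ω p.1 * b ω p'.1 *
        ((if p.2 = p'.2 then
            a ω (Fin.castSucc p.2) / (mtv M (b ω) (Fin.castSucc p.2)) ^ 2
          else 0) +
          a ω (Fin.last c) / (mtv M (b ω) (Fin.last c)) ^ 2) ∂μ)
      = ∫ ω, g p p' ω ∂μ := by
    intro p p'
    by_cases h : p.2 = p'.2
    · calc (∫ ω, b ω p.1 * b ω p'.1 *
          ((if p.2 = p'.2 then
              a ω (Fin.castSucc p.2) / (mtv M (b ω) (Fin.castSucc p.2)) ^ 2
            else 0) +
            a ω (Fin.last c) / (mtv M (b ω) (Fin.last c)) ^ 2) ∂μ)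
          = ∫ ω, (b ω p.1 * b ω p'.1 / (mtv M (b ω) (Fin.castSucc p.2))^2
              * a ω (Fin.castSucc p.2)
            + b ω p.1 * b ω p'.1 / (mtv M (b ω) (Fin.last c))^2 * a ω (Fin.last c)) ∂μ := by
            refine integral_congr_ae (Filter.Eventually.of_forall fun ω => ?_)
            simp only [if_pos h]; ring
        _ = (∫ ω, b ω p.1 * b ω p'.1 / (mtv M (b ω) (Fin.castSucc p.2))^2
              * a ω (Fin.castSucc p.2) ∂μ)
            + ∫ ω, b ω p.1 * b ω p'.1 / (mtv M (b ω) (Fin.last c))^2 * a ω (Fin.last c) ∂μ :=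
            integral_add (hGAint _ _ _ _) (hGAint _ _ _ _)
        _ = (∫ ω, b ω p.1 * b ω p'.1 / (mtv M (b ω) (Fin.castSucc p.2))^2
              * mtv M0 (b ω) (Fin.castSucc p.2) ∂μ)
            + ∫ ω, b ω p.1 * b ω p'.1 / (mtv M (b ω) (Fin.last c))^2
              * mtv M0 (b ω) (Fin.last c) ∂μ := by
            rw [hswap, hswap]
        _ = ∫ ω, (b ω p.1 * b ω p'.1 / (mtv M (b ω) (Fin.castSucc p.2))^2
              * mtv M0 (b ω) (Fin.castSucc p.2)
            + b ω p.1 * b ω p'.1 / (mtv M (b ω) (Fin.last c))^2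
              * mtv M0 (b ω) (Fin.last c)) ∂μ :=
            (integral_add (hGRint _ _ _ _) (hGRint _ _ _ _)).symm
        _ = ∫ ω, g p p' ω ∂μ := by
            refine integral_congr_ae (Filter.Eventually.of_forall fun ω => ?_)
            simp only [hgdef, if_pos h, hRdef]
            ring
    · calc (∫ ω, b ω p.1 * b ω p'.1 *
          ((if p.2 = p'.2 then
              a ω (Fin.castSucc p.2) / (mtv M (b ω) (Fin.castSucc p.2)) ^ 2
            else 0) +
            a ω (Fin.last c) / (mtv M (b ω) (Fin.last c)) ^ 2) ∂μ)
          = ∫ ω, b ω p.1 * b ω p'.1 / (mtv M (b ω) (Fin.last c))^2 * a ω (Fin.last c) ∂μ := by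
            refine integral_congr_ae (Filter.Eventually.of_forall fun ω => ?_)
            simp only [if_neg h]; ring
        _ = ∫ ω, b ω p.1 * b ω p'.1 / (mtv M (b ω) (Fin.last c))^2
              * mtv M0 (b ω) (Fin.last c) ∂μ := hswap _ _ _ _
        _ = ∫ ω, g p p' ω ∂μ := by
            refine integral_congr_ae (Filter.Eventually.of_forall fun ω => ?_)
            simp only [hgdef, if_neg h, hRdef]
            ring
  rw [Matrix.posDef_iff_dotProduct_mulVec]
  constructor
  · -- symmetry
    refine Matrix.ext fun p p' => ?_
    simp only [Matrix.conjTranspose_apply, Matrix.of_apply, star_trivial]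
    congr 1
    refine integral_congr_ae (Filter.Eventually.of_forall fun ω => ?_)
    by_cases h : p.2 = p'.2
    · simp only [h, eq_self_iff_true, if_true]
      ring
    · simp only [if_neg h, if_neg (fun hh : p'.2 = p.2 => h hh.symm)]
      ring
  · -- positive definiteness
    intro v hv
    -- the quadratic form function F
    set F : Ωs → ℝ := fun ω => ∑ p : Fin (c+1) × Fin c, ∑ p' : Fin (c+1) × Fin c,
      v p * v p' * g p p' ω with hFdef
    have hFint : Integrable F μ := by
      rw [hFdef]
      refine integrable_finset_sum _ fun p _ => integrable_finset_sum _ fun p' _ => ?_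
      exact (hgint p p').const_mul _
    have hform : dotProduct (star v) (Matrix.mulVec (Matrix.of fun ij ij' : Fin (c+1) × Fin c =>
        ξ * ∫ ω, b ω ij.1 * b ω ij'.1 *
          ((if ij.2 = ij'.2 then
              a ω (Fin.castSucc ij.2) / (mtv M (b ω) (Fin.castSucc ij.2)) ^ 2
            else 0) +
            a ω (Fin.last c) / (mtv M (b ω) (Fin.last c)) ^ 2) ∂μ) v)
        = ξ * ∫ ω, F ω ∂μ := by
      calc dotProduct (star v) (Matrix.mulVec _ v)
          = ∑ p : Fin (c+1) × Fin c, ∑ p' : Fin (c+1) × Fin c,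
            v p * v p' * (ξ * ∫ ω, g p p' ω ∂μ) := by
            simp only [dotProduct, Matrix.mulVec, Matrix.of_apply, Finset.mul_sum,
              Pi.star_apply, star_trivial]
            refine Finset.sum_congr rfl fun p _ => Finset.sum_congr rfl fun p' _ => ?_
            rw [hEntry p p']
            ring
        _ = ξ * ∑ p : Fin (c+1) × Fin c, ∑ p' : Fin (c+1) × Fin c,
            ∫ ω, v p * v p' * g p p' ω ∂μ := by
            rw [Finset.mul_sum]
            refine Finset.sum_congr rfl fun p _ => ?_
            rw [Finset.mul_sum]
            refine Finset.sum_congr rfl fun p' _ => ?_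
            rw [MeasureTheory.integral_const_mul]
            ring
        _ = ξ * ∫ ω, F ω ∂μ := by
            congr 1
            have h1 : ∀ p : Fin (c+1) × Fin c,
                (∑ p' : Fin (c+1) × Fin c, ∫ ω, v p * v p' * g p p' ω ∂μ)
                = ∫ ω, ∑ p' : Fin (c+1) × Fin c, v p * v p' * g p p' ω ∂μ :=
              fun p => (integral_finset_sum _ fun p' _ => (hgint p p').const_mul _).symm
            rw [Finset.sum_congr rfl fun p _ => h1 p]
            exact (integral_finset_sum _ fun p _ =>
              integrable_finset_sum _ fun p' _ => (hgint p p').const_mul _).symm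
    rw [hform]
    -- F rewritten via quad_id
    have hFeq : ∀ ω, F ω
        = (∑ j : Fin c, (∑ i, v (i,j) * b ω i)^2 * R (Fin.castSucc j) ω)
          + (∑ j : Fin c, ∑ i, v (i,j) * b ω i)^2 * R (Fin.last c) ω := by
      intro ω
      rw [hFdef]
      exact quad_id v (b ω) (fun k => R k ω)
    have hFnn : ∀ ω, 0 ≤ F ω := by
      intro ω
      rw [hFeq ω]
      refine add_nonneg (Finset.sum_nonneg fun j _ => mul_nonneg (sq_nonneg _) (hR_nn _ ω))
        (mul_nonneg (sq_nonneg _) (hR_nn _ ω))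
    -- find witness coordinate
    obtain ⟨p0, hp0⟩ := Function.ne_iff.mp hv
    have hp0' : v p0 ≠ 0 := hp0
    set d := |v p0| with hd_def
    have hd : 0 < d := abs_pos.mpr hp0'
    set V := ∑ p : Fin (c+1) × Fin c, |v p| with hV_def
    set ε := d / (4 * (V + 1)) with hε_def
    have hdV : d ≤ V := by
      rw [hd_def, hV_def]
      exact Finset.single_le_sum (f := fun p => |v p|) (fun p _ => abs_nonneg _) (mem_univ p0)
    have hε : 0 < ε := by
      rw [hε_def]
      have : 0 < V + 1 := by linarith
      positivity
    set S := {ω | 1 - ε ≤ b ω p0.1} with hSdef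
    have hSmeas : MeasurableSet S :=
      measurableSet_le measurable_const (hbm p0.1)
    have hSpos : 0 < μ S := hpos p0.1 ε hε
    have hlow : ∀ ω ∈ S, (d/2)^2 * m0 ≤ F ω := by
      intro ω hω
      have hw : d / 2 ≤ |∑ i, v (i, p0.2) * b ω i| := by
        refine w_lb v p0 hp0' (b ω) (hb_simplex ω) ?_
        exact hω
      have hw2 : (d/2)^2 ≤ (∑ i, v (i, p0.2) * b ω i)^2 := by
        rw [← sq_abs (∑ i, v (i, p0.2) * b ω i)]
        exact pow_le_pow_left₀ (by positivity) hw 2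
      have hterm : (d/2)^2 * m0 ≤ (∑ i, v (i, p0.2) * b ω i)^2 * R (Fin.castSucc p0.2) ω :=
        mul_le_mul hw2 (hR_lb _ ω) hm0pos.le (sq_nonneg _)
      calc (d/2)^2 * m0 ≤ (∑ i, v (i, p0.2) * b ω i)^2 * R (Fin.castSucc p0.2) ω := hterm
      _ ≤ ∑ j : Fin c, (∑ i, v (i,j) * b ω i)^2 * R (Fin.castSucc j) ω :=
        Finset.single_le_sum
          (f := fun j => (∑ i, v (i,j) * b ω i)^2 * R (Fin.castSucc j) ω)
          (fun j _ => mul_nonneg (sq_nonneg _) (hR_nn _ ω)) (mem_univ p0.2)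
      _ ≤ F ω := by
        rw [hFeq ω]
        exact le_add_of_nonneg_right (mul_nonneg (sq_nonneg _) (hR_nn _ ω))
    have hδ : 0 < (d/2)^2 * m0 := by positivity
    exact mul_pos hξ (integral_pos_aux hFint hFnn hSmeas hSpos hδ hlow)


end GBQL
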